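/- An RTAS is not directed if and only if there exist producible assemblies α, β and a position p ∈ dom(α) ∩ dom(β) such that α(p) ≠ β(p); equivalently, it is directed if and only if any two producible assemblies agree on every position lying in both of their domains. -/

import Mathlib

/-- A tile type: a quadruple of glue labels (strings). -/
structure TileType where
  north : String
  west : String
  south : String
  east : String
deriving DecidableEq

/-- An assembly: a partial function from ℤ² to tile types. -/
abbrev Assembly := ℤ × ℤ → Option TileType

/-- A rectilinear tile assembly system (RTAS) of width `w ≥ 1` and height `h ≥ 1`:
a finite set `T` of tile types, together with an L-shaped seed assembly `σ` whose
domain is `{(x,0) : 0 ≤ x ≤ w} ∪ {(0,y) : 0 ≤ y ≤ h}` and which uses tile types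
not in `T`. (All glues have strength 1 and the temperature is 2; this is encoded
in the attachment rule below.) -/
structure RTAS where
  w : ℕ
  h : ℕ
  hw : 1 ≤ w
  hh : 1 ≤ h
  T : Finset TileType
  σ : Assembly
  seed_dom : ∀ p : ℤ × ℤ, (σ p).isSome ↔
      (0 ≤ p.1 ∧ p.1 ≤ (w : ℤ) ∧ p.2 = 0) ∨ (p.1 = 0 ∧ 0 ≤ p.2 ∧ p.2 ≤ (h : ℤ))
  seed_not_in_T : ∀ p t, σ p = some t → t ∉ T

namespace RTAS

/-- A tile of type `t ∈ T` may attach to assembly `α` at position `p ∉ dom α`: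
both the west neighbor and the south neighbor lie in `dom α`, the east glue of
the west neighbor equals `t.west`, and the north glue of the south neighbor
equals `t.south` (cooperation of two strength-1 glues at temperature 2). -/
def Attaches (S : RTAS) (α : Assembly) (p : ℤ × ℤ) (t : TileType) : Prop :=
  t ∈ S.T ∧ α p = none ∧
    ∃ tw ts : TileType,
      α (p.1 - 1, p.2) = some tw ∧ α (p.1, p.2 - 1) = some ts ∧
      tw.east = t.west ∧ ts.north = t.south

/-- One-step growth: `β` is obtained from `α` by a single tile attachment. -/
def Step (S : RTAS) (α β : Assembly) : Prop :=
  ∃ p t, S.Attaches α p t ∧ β = Function.update α p (some t)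

/-- An assembly is producible if it is obtained from the seed `σ` by a finite
sequence of single-tile attachments. -/
def Producible (S : RTAS) (α : Assembly) : Prop :=
  Relation.ReflTransGen S.Step S.σ α

/-- A producible assembly is terminal if no tile can attach to it. -/
def Terminal (S : RTAS) (α : Assembly) : Prop :=
  S.Producible α ∧ ∀ p t, ¬ S.Attaches α p t

/-- The RTAS is directed if any two producible assemblies have a common
producible extension. -/
def IsDirected (S : RTAS) : Prop :=
  ∀ α β, S.Producible α → S.Producible β →
    ∃ γ, Relation.ReflTransGen S.Step α γ ∧ Relation.ReflTransGen S.Step β γ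

/-- Every tile type of `T` appears in some producible assembly. -/
def UsesAllTiles (S : RTAS) : Prop :=
  ∀ t ∈ S.T, ∃ (α : Assembly) (p : ℤ × ℤ), S.Producible α ∧ α p = some t

/-- The domain `{0,…,w} × {0,…,h}` of a pattern of width `w` and height `h`. -/
def PatternDom (w h : ℕ) : Set (ℤ × ℤ) :=
  {p | 0 ≤ p.1 ∧ p.1 ≤ (w : ℤ) ∧ 0 ≤ p.2 ∧ p.2 ≤ (h : ℤ)}

/-- `S` uniquely self-assembles the pattern `P` (of width `S.w` and height `S.h`)
with coloring function `f`: every terminal producible assembly `α` has domain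
`dom P` and satisfies `f (α p) = P p` on it. -/
def UniquelySelfAssembles (S : RTAS) (P : ℤ × ℤ → ℕ) (f : TileType → ℕ) : Prop :=
  ∀ α, S.Terminal α →
    (∀ p : ℤ × ℤ, (α p).isSome ↔ p ∈ PatternDom S.w S.h) ∧
    (∀ p t, α p = some t → f t = P p)

end RTAS

private lemma step_mono (S : RTAS) {α β : Assembly} (h : S.Step α β) :
    ∀ p t, α p = some t → β p = some t := by
  obtain ⟨q, u, hatt, rfl⟩ := h
  intro p t hp
  have hpq : p ≠ q := fun he => by rw [he, hatt.2.1] at hp; cases hp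
  rw [Function.update_of_ne hpq]; exact hp

private lemma rtg_mono (S : RTAS) {α γ : Assembly} (h : Relation.ReflTransGen S.Step α γ) :
    ∀ p t, α p = some t → γ p = some t := by
  induction h with
  | refl => exact fun _ _ h => h
  | tail _ hstep ih => exact fun p t hp => step_mono S hstep p t (ih p t hp)

private lemma merge_reach (S : RTAS)
    (H : ∀ α β : Assembly, S.Producible α → S.Producible β →
        ∀ p : ℤ × ℤ, (α p).isSome → (β p).isSome → α p = β p)
    {β : Assembly} (hβ : S.Producible β) :
    ∀ {α : Assembly}, S.Producible α →
      Relation.ReflTransGen S.Step β (fun q => (α q).or (β q)) := by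
  intro α hα
  induction hα with
  | refl =>
      have heq : (fun q => (S.σ q).or (β q)) = β := by
        funext q
        cases hq : S.σ q with
        | none => simp
        | some t => simp [rtg_mono S hβ q t hq]
      rw [heq]
  | @tail δ α' h hstep ih =>
      obtain ⟨p, t, hatt, rfl⟩ := hstep
      by_cases hbp : (β p).isSome
      · have hα' : S.Producible (Function.update δ p (some t)) :=
          h.tail ⟨p, t, hatt, rfl⟩
        have heq : β p = some t := by
          have h2 := H _ _ hα' hβ p (by simp) hbp
          rw [Function.update_self] at h2; exact h2.symm
        have hfun : (fun q => ((Function.update δ p (some t)) q).or (β q))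
             = (fun q => (δ q).or (β q)) := by
          funext q
          by_cases hq : q = p
          · subst hq; simp [Function.update_self, hatt.2.1, heq]
          · simp [Function.update_of_ne hq]
        rw [hfun]; exact ih
      · have hbpn : β p = none := Option.not_isSome_iff_eq_none.mp hbp
        refine ih.tail ?_
        obtain ⟨htT, hδp, tw, ts, hw, hs, hew, hns⟩ := hatt
        refine ⟨p, t, ⟨htT, ?_, tw, ts, ?_, ?_, hew, hns⟩, ?_⟩
        · simp [hδp, hbpn]
        · simp [hw]
        · simp [hs]
        · funext q
          by_cases hq : q = p
          · subst hq; simp [hδp, hbpn]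
          · simp [Function.update_of_ne hq]

/-- An RTAS is not directed iff there are producible assemblies disagreeing at
some common position; equivalently, it is directed iff any two producible
assemblies agree on every position lying in both of their domains. -/
theorem not_directed_iff_conflict (S : RTAS) (hused : S.UsesAllTiles) :
    (¬ S.IsDirected ↔
      ∃ (α β : Assembly) (p : ℤ × ℤ), S.Producible α ∧ S.Producible β ∧
        (α p).isSome ∧ (β p).isSome ∧ α p ≠ β p) ∧
    (S.IsDirected ↔
      ∀ α β : Assembly, S.Producible α → S.Producible β →
        ∀ p : ℤ × ℤ, (α p).isSome → (β p).isSome → α p = β p) := by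
  have key : S.IsDirected ↔
      ∀ α β : Assembly, S.Producible α → S.Producible β →
        ∀ p : ℤ × ℤ, (α p).isSome → (β p).isSome → α p = β p := by
    constructor
    · intro hd α β hα hβ p hap hbp
      obtain ⟨γ, hαγ, hβγ⟩ := hd α β hα hβ
      obtain ⟨ta, hta⟩ := Option.isSome_iff_exists.mp hap
      obtain ⟨tb, htb⟩ := Option.isSome_iff_exists.mp hbp
      have h1 := rtg_mono S hαγ p ta hta
      have h2 := rtg_mono S hβγ p tb htb
      rw [hta, htb]
      exact h1.symm.trans h2
    · intro H α β hα hβ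
      refine ⟨fun q => (α q).or (β q), ?_, merge_reach S H hβ hα⟩
      have h1 := merge_reach S H hα hβ
      have heq : (fun q => (β q).or (α q)) = (fun q => (α q).or (β q)) := by
        funext q
        cases ha : α q with
        | none => simp
        | some ta =>
          cases hb : β q with
          | none => simp
          | some tb =>
            have h3 := H α β hα hβ q (by simp [ha]) (by simp [hb])
            rw [ha, hb] at h3
            simp [Option.some.inj h3]
      rw [heq] at h1
      exact h1
  refine ⟨?_, key⟩
  rw [key]
  push_neg
  constructor
  · rintro ⟨α, β, hα, hβ, p, hap, hbp, hne⟩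
    exact ⟨α, β, p, hα, hβ, hap, hbp, hne⟩
  · rintro ⟨α, β, p, hα, hβ, hap, hbp, hne⟩
    exact ⟨α, β, hα, hβ, p, hap, hbp, hne⟩
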